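/- Let f be a function on real symmetric 3×3 matrices satisfying f(RQRᵀ) = f(Q) for all R ∈ SO(3). Then there exists a function g such that f(Q) = g(tr Q, tr Q², tr Q³) for all symmetric Q. -/

import Mathlib

open Matrix Polynomial



section
variable {f : Matrix (Fin 3) (Fin 3) ℝ → ℝ}
  (hiso : ∀ R : Matrix (Fin 3) (Fin 3) ℝ, Rᵀ * R = 1 → R.det = 1 →
      ∀ Q : Matrix (Fin 3) (Fin 3) ℝ, Q.IsSymm → f (R * Q * Rᵀ) = f Q)

lemma diag3 (x y z : ℝ) : (diagonal ![x,y,z] : Matrix (Fin 3) (Fin 3) ℝ) = !![x,0,0;0,y,0;0,0,z] := by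
  ext i j; fin_cases i <;> fin_cases j <;>
    simp [diagonal, Matrix.vecHead, Matrix.vecTail]

include hiso

lemma swap01 (x y z : ℝ) : f (diagonal ![x,y,z]) = f (diagonal ![y,x,z]) := by
  have ht : (!![0,1,0;1,0,0;0,0,-1] : Matrix (Fin 3) (Fin 3) ℝ)ᵀ = !![0,1,0;1,0,0;0,0,-1] := by
    ext i j; fin_cases i <;> fin_cases j <;> rfl
  have h1 : (!![0,1,0;1,0,0;0,0,-1] : Matrix (Fin 3) (Fin 3) ℝ)ᵀ * !![0,1,0;1,0,0;0,0,-1] = 1 := by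
    rw [ht, mul_fin_three, one_fin_three]; norm_num
  have h2 : (!![0,1,0;1,0,0;0,0,-1] : Matrix (Fin 3) (Fin 3) ℝ).det = 1 := by
    simp [Matrix.det_fin_three]
  have h3 := hiso _ h1 h2 (diagonal ![x,y,z]) (isSymm_diagonal _)
  rw [ht, diag3, mul_fin_three, mul_fin_three] at h3
  rw [diag3 x y z, diag3 y x z]
  norm_num at h3
  exact h3.symm

lemma swap12 (x y z : ℝ) : f (diagonal ![x,y,z]) = f (diagonal ![x,z,y]) := by
  have ht : (!![-1,0,0;0,0,1;0,1,0] : Matrix (Fin 3) (Fin 3) ℝ)ᵀ = !![-1,0,0;0,0,1;0,1,0] := by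
    ext i j; fin_cases i <;> fin_cases j <;> rfl
  have h1 : (!![-1,0,0;0,0,1;0,1,0] : Matrix (Fin 3) (Fin 3) ℝ)ᵀ * !![-1,0,0;0,0,1;0,1,0] = 1 := by
    rw [ht, mul_fin_three, one_fin_three]; norm_num
  have h2 : (!![-1,0,0;0,0,1;0,1,0] : Matrix (Fin 3) (Fin 3) ℝ).det = 1 := by
    simp [Matrix.det_fin_three]
  have h3 := hiso _ h1 h2 (diagonal ![x,y,z]) (isSymm_diagonal _)
  rw [ht, diag3, mul_fin_three, mul_fin_three] at h3
  rw [diag3 x y z, diag3 x z y]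
  norm_num at h3
  exact h3.symm
end

section
variable {f : Matrix (Fin 3) (Fin 3) ℝ → ℝ}
  (hiso : ∀ R : Matrix (Fin 3) (Fin 3) ℝ, Rᵀ * R = 1 → R.det = 1 →
      ∀ Q : Matrix (Fin 3) (Fin 3) ℝ, Q.IsSymm → f (R * Q * Rᵀ) = f Q)

include hiso in
lemma to_diag (Q : Matrix (Fin 3) (Fin 3) ℝ) (hQ : Q.IsSymm) :
    ∃ d : Fin 3 → ℝ, f Q = f (diagonal d) ∧ ∀ k : ℕ, (Q ^ k).trace = ∑ i, d i ^ k := by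
  have hH : Q.IsHermitian := by
    show Qᴴ = Q
    rw [conjTranspose_eq_transpose_of_trivial]; exact hQ
  set U : Matrix (Fin 3) (Fin 3) ℝ := (hH.eigenvectorUnitary : Matrix (Fin 3) (Fin 3) ℝ) with hU
  set d : Fin 3 → ℝ := hH.eigenvalues with hd
  have hspec : Q = U * diagonal d * Uᵀ := by
    have := hH.spectral_theorem
    rwa [Unitary.conjStarAlgAut_apply, Matrix.star_eq_conjTranspose,
      conjTranspose_eq_transpose_of_trivial] at this
  have hUorth : Uᵀ * U = 1 := by
    have := Matrix.mem_unitaryGroup_iff'.mp hH.eigenvectorUnitary.2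
    rwa [Matrix.star_eq_conjTranspose, conjTranspose_eq_transpose_of_trivial] at this
  have hUorth' : U * Uᵀ = 1 := mul_eq_one_comm.mp hUorth
  have hdet : U.det * U.det = 1 := by
    have := congrArg Matrix.det hUorth
    rwa [Matrix.det_mul, Matrix.det_transpose, Matrix.det_one] at this
  set E : Matrix (Fin 3) (Fin 3) ℝ := diagonal ![U.det, 1, 1] with hE
  have hEsymm : Eᵀ = E := isSymm_diagonal _
  have hEE : E * E = 1 := by
    rw [hE, diagonal_mul_diagonal]
    have hv : (fun i => (![U.det, 1, 1] : Fin 3 → ℝ) i * ![U.det, 1, 1] i) = fun _ => (1:ℝ) := by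
      funext i; fin_cases i <;> simp [hdet]
    rw [hv]
    exact diagonal_one
  set R : Matrix (Fin 3) (Fin 3) ℝ := U * E with hR
  have hR1 : Rᵀ * R = 1 := by
    rw [hR, transpose_mul, hEsymm, mul_assoc, ← mul_assoc Uᵀ U E, hUorth, Matrix.one_mul, hEE]
  have hR2 : R.det = 1 := by
    rw [hR, Matrix.det_mul, hE, det_diagonal, Fin.prod_univ_three]
    simpa using hdet
  have hEDE : E * diagonal d * E = diagonal d := by
    rw [hE, diagonal_mul_diagonal, diagonal_mul_diagonal]
    have hv : (fun i => (![U.det, 1, 1] : Fin 3 → ℝ) i * d i * ![U.det, 1, 1] i) = d := by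
      funext i
      fin_cases i <;> simp <;> linear_combination (d 0) * hdet
    rw [hv]
  have hRQ : R * diagonal d * Rᵀ = Q := by
    rw [hR, transpose_mul, hEsymm, hspec]
    have : U * E * diagonal d * (E * Uᵀ) = U * (E * diagonal d * E) * Uᵀ := by
      simp only [mul_assoc]
    rw [this, hEDE]
  have hf : f Q = f (diagonal d) := by
    have := hiso R hR1 hR2 (diagonal d) (isSymm_diagonal _)
    rwa [hRQ] at this
  refine ⟨d, hf, fun k => ?_⟩
  let u : (Matrix (Fin 3) (Fin 3) ℝ)ˣ := ⟨U, Uᵀ, hUorth', hUorth⟩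
  have hQu : Q = (u : Matrix (Fin 3) (Fin 3) ℝ) * diagonal d * ((u⁻¹ : (Matrix (Fin 3) (Fin 3) ℝ)ˣ) : Matrix (Fin 3) (Fin 3) ℝ) := hspec
  rw [hQu, Units.conj_pow, Matrix.trace_mul_cycle, u.inv_mul, Matrix.one_mul,
    diagonal_pow, trace_diagonal]
  simp [Pi.pow_apply]
end


lemma ms_eq (a b c a' b' c' : ℝ) (h1 : a + b + c = a' + b' + c')
    (h2 : a^2 + b^2 + c^2 = a'^2 + b'^2 + c'^2)
    (h3 : a^3 + b^3 + c^3 = a'^3 + b'^3 + c'^3) :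
    ({a, b, c} : Multiset ℝ) = {a', b', c'} := by
  have e2 : a*b + a*c + b*c = a'*b' + a'*c' + b'*c' := by
    linear_combination ((a+b+c+a'+b'+c')/2) * h1 - (1/2) * h2
  have e3 : a*b*c = a'*b'*c' := by
    linear_combination (((a+b+c)^2 + (a+b+c)*(a'+b'+c') + (a'+b'+c')^2)/6
      - (a'^2+b'^2+c'^2)/2) * h1 - ((a+b+c)/2) * h2 + (1/3) * h3
  have hC1 : (C a + C b + C c : ℝ[X]) = C a' + C b' + C c' := by
    rw [← map_add, ← map_add, h1, map_add, map_add]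
  have hC2 : (C a * C b + C a * C c + C b * C c : ℝ[X])
      = C a' * C b' + C a' * C c' + C b' * C c' := by
    simp only [← _root_.map_mul, ← map_add, e2]
  have hC3 : (C a * C b * C c : ℝ[X]) = C a' * C b' * C c' := by
    simp only [← _root_.map_mul, e3]
  have hp : ((({a, b, c} : Multiset ℝ)).map fun t => (X : ℝ[X]) - C t).prod
      = (({a', b', c'} : Multiset ℝ).map fun t => (X : ℝ[X]) - C t).prod := by
    simp only [Multiset.insert_eq_cons, Multiset.map_cons, Multiset.map_singleton,
      Multiset.prod_cons, Multiset.prod_singleton]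
    linear_combination (-(X^2) : ℝ[X]) * hC1 + (X : ℝ[X]) * hC2 - hC3
  calc ({a, b, c} : Multiset ℝ)
      = ((({a, b, c} : Multiset ℝ)).map fun t => (X : ℝ[X]) - C t).prod.roots := by
        rw [roots_multiset_prod_X_sub_C]
    _ = (({a', b', c'} : Multiset ℝ).map fun t => (X : ℝ[X]) - C t).prod.roots := by rw [hp]
    _ = {a', b', c'} := roots_multiset_prod_X_sub_C _


lemma two_eq {x y x' y' : ℝ} (h : ({x, y} : Multiset ℝ) = {x', y'}) :
    (x' = x ∧ y' = y) ∨ (x' = y ∧ y' = x) := by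
  simp only [Multiset.insert_eq_cons] at h
  have hx : x' = x ∨ x' = y := by
    have : x' ∈ (x ::ₘ {y} : Multiset ℝ) := by rw [h]; simp
    simpa using this
  rcases hx with hx | hx
  · left
    refine ⟨hx, ?_⟩
    rw [hx] at h
    rw [Multiset.cons_inj_right, Multiset.singleton_inj] at h
    exact h.symm
  · right
    refine ⟨hx, ?_⟩
    rw [hx] at h
    have hsw : (x ::ₘ {y} : Multiset ℝ) = y ::ₘ {x} := by
      have := Multiset.cons_swap x y (0 : Multiset ℝ)
      simpa using this
    rw [hsw, Multiset.cons_inj_right, Multiset.singleton_inj] at h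
    exact h.symm

lemma three_cases {x y z x' y' z' : ℝ} (h : ({x, y, z} : Multiset ℝ) = {x', y', z'}) :
    (x' = x ∧ y' = y ∧ z' = z) ∨ (x' = x ∧ y' = z ∧ z' = y) ∨
    (x' = y ∧ y' = x ∧ z' = z) ∨ (x' = y ∧ y' = z ∧ z' = x) ∨
    (x' = z ∧ y' = x ∧ z' = y) ∨ (x' = z ∧ y' = y ∧ z' = x) := by
  simp only [Multiset.insert_eq_cons] at h
  have hx : x' = x ∨ x' = y ∨ x' = z := by
    have : x' ∈ (x ::ₘ y ::ₘ {z} : Multiset ℝ) := by rw [h]; simp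
    simpa using this
  rcases hx with hx | hx | hx
  · rw [hx] at h
    rw [Multiset.cons_inj_right] at h
    have := two_eq (by simpa [Multiset.insert_eq_cons] using h.symm)
    rcases this with ⟨h1, h2⟩ | ⟨h1, h2⟩
    · exact Or.inl ⟨hx, h1.symm, h2.symm⟩
    · exact Or.inr (Or.inl ⟨hx, h2.symm, h1.symm⟩)
  · rw [hx] at h
    rw [Multiset.cons_swap, Multiset.cons_inj_right] at h
    have := two_eq (by simpa [Multiset.insert_eq_cons] using h.symm)
    rcases this with ⟨h1, h2⟩ | ⟨h1, h2⟩
    · exact Or.inr (Or.inr (Or.inl ⟨hx, h1.symm, h2.symm⟩))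
    · exact Or.inr (Or.inr (Or.inr (Or.inl ⟨hx, h2.symm, h1.symm⟩)))
  · rw [hx] at h
    rw [show (x ::ₘ y ::ₘ {z} : Multiset ℝ) = z ::ₘ x ::ₘ {y} from by
      have hsw := Multiset.cons_swap y z (0 : Multiset ℝ)
      simp only [Multiset.cons_zero] at hsw
      rw [hsw, Multiset.cons_swap x z]] at h
    rw [Multiset.cons_inj_right] at h
    have := two_eq (by simpa [Multiset.insert_eq_cons] using h.symm)
    rcases this with ⟨h1, h2⟩ | ⟨h1, h2⟩
    · exact Or.inr (Or.inr (Or.inr (Or.inr (Or.inl ⟨hx, h1.symm, h2.symm⟩))))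
    · exact Or.inr (Or.inr (Or.inr (Or.inr (Or.inr ⟨hx, h2.symm, h1.symm⟩))))

section
variable {f : Matrix (Fin 3) (Fin 3) ℝ → ℝ}
  (hiso : ∀ R : Matrix (Fin 3) (Fin 3) ℝ, Rᵀ * R = 1 → R.det = 1 →
      ∀ Q : Matrix (Fin 3) (Fin 3) ℝ, Q.IsSymm → f (R * Q * Rᵀ) = f Q)

include hiso in
lemma diag_ms (a b c a' b' c' : ℝ) (h : ({a, b, c} : Multiset ℝ) = {a', b', c'}) :
    f (diagonal ![a,b,c]) = f (diagonal ![a',b',c']) := by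
  have s01 : ∀ x y z : ℝ, f (diagonal ![x,y,z]) = f (diagonal ![y,x,z]) := fun x y z => swap01 hiso x y z
  have s12 : ∀ x y z : ℝ, f (diagonal ![x,y,z]) = f (diagonal ![x,z,y]) := fun x y z => swap12 hiso x y z
  rcases three_cases h with ⟨h1,h2,h3⟩|⟨h1,h2,h3⟩|⟨h1,h2,h3⟩|⟨h1,h2,h3⟩|⟨h1,h2,h3⟩|⟨h1,h2,h3⟩ <;>
    rw [h1, h2, h3]
  · exact (s12 a b c)
  · exact (s01 a b c)
  · exact (s01 a b c).trans (s12 b a c)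
  · exact (s12 a b c).trans (s01 a c b)
  · exact ((s12 a b c).trans (s01 a c b)).trans (s12 c a b)

include hiso in
lemma key_eq (Q Q' : Matrix (Fin 3) (Fin 3) ℝ) (hQ : Q.IsSymm) (hQ' : Q'.IsSymm)
    (h1 : Q.trace = Q'.trace) (h2 : (Q ^ 2).trace = (Q' ^ 2).trace)
    (h3 : (Q ^ 3).trace = (Q' ^ 3).trace) : f Q = f Q' := by
  obtain ⟨d, hfd, htr⟩ := to_diag hiso Q hQ
  obtain ⟨e, hfe, htr'⟩ := to_diag hiso Q' hQ'
  have p1 : d 0 + d 1 + d 2 = e 0 + e 1 + e 2 := by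
    have hA := htr 1
    have hB := htr' 1
    rw [pow_one] at hA hB
    simp only [Fin.sum_univ_three, pow_one] at hA hB
    rw [← hA, ← hB, h1]
  have p2 : d 0 ^ 2 + d 1 ^ 2 + d 2 ^ 2 = e 0 ^ 2 + e 1 ^ 2 + e 2 ^ 2 := by
    have hA := htr 2
    have hB := htr' 2
    simp only [Fin.sum_univ_three] at hA hB
    rw [← hA, ← hB, h2]
  have p3 : d 0 ^ 3 + d 1 ^ 3 + d 2 ^ 3 = e 0 ^ 3 + e 1 ^ 3 + e 2 ^ 3 := by
    have hA := htr 3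
    have hB := htr' 3
    simp only [Fin.sum_univ_three] at hA hB
    rw [← hA, ← hB, h3]
  have hms := ms_eq (d 0) (d 1) (d 2) (e 0) (e 1) (e 2) p1 p2 p3
  have hd3 : d = ![d 0, d 1, d 2] := by funext i; fin_cases i <;> rfl
  have he3 : e = ![e 0, e 1, e 2] := by funext i; fin_cases i <;> rfl
  have hdg : f (diagonal d) = f (diagonal e) := by
    rw [hd3, he3]
    exact diag_ms hiso _ _ _ _ _ _ hms
  exact hfd.trans (hdg.trans hfe.symm)
end

theorem isotropic_function_representation (f : Matrix (Fin 3) (Fin 3) ℝ → ℝ)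
    (hiso : ∀ R : Matrix (Fin 3) (Fin 3) ℝ, Rᵀ * R = 1 → R.det = 1 →
      ∀ Q : Matrix (Fin 3) (Fin 3) ℝ, Q.IsSymm → f (R * Q * Rᵀ) = f Q) :
    ∃ g : ℝ → ℝ → ℝ → ℝ, ∀ Q : Matrix (Fin 3) (Fin 3) ℝ, Q.IsSymm →
      f Q = g Q.trace (Q ^ 2).trace (Q ^ 3).trace := by
  classical
  refine ⟨fun a b c =>
    if h : ∃ Q : Matrix (Fin 3) (Fin 3) ℝ,
        Q.IsSymm ∧ Q.trace = a ∧ (Q ^ 2).trace = b ∧ (Q ^ 3).trace = c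
    then f h.choose else 0, ?_⟩
  intro Q hQ
  have hex : ∃ Q' : Matrix (Fin 3) (Fin 3) ℝ,
      Q'.IsSymm ∧ Q'.trace = Q.trace ∧ (Q' ^ 2).trace = (Q ^ 2).trace ∧
        (Q' ^ 3).trace = (Q ^ 3).trace := ⟨Q, hQ, rfl, rfl, rfl⟩
  beta_reduce
  rw [dif_pos hex]
  obtain ⟨hs, h1, h2, h3⟩ := hex.choose_spec
  exact key_eq hiso Q hex.choose hQ hs h1.symm h2.symm h3.symm
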